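/- For an uncountable cardinal κ, if there exists a regular cardinal λ ≤ κ such that every abelian group A with Hom(A, ℤ) = 0 is the sum of its subgroups of cardinality < λ that themselves have trivial dual, then: for any nonempty system S of homogeneous ℤ-linear equations with no weakly nontrivial solution in ℤ, and any subsystem C ⊆ S of cardinality < κ, there exists a subsystem T with C ⊆ T ⊆ S, |T| < κ, such that T has no weakly nontrivial solution in ℤ. -/

import Mathlib

universe u


open Cardinal Submodule

lemma mk_span_int_le {M : Type u} [AddCommGroup M] (s : Set M) :
    #(span ℤ s) ≤ max ℵ₀ #s := by
  classical
  rcases s.eq_empty_or_nonempty with rfl | hs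
  · rw [span_empty]
    refine le_trans ?_ (le_max_left _ _)
    exact (mk_le_one_iff_set_subsingleton.2 (by simp [Set.subsingleton_of_subsingleton])).trans
      one_le_aleph0
  · have hne : Nonempty s := hs.to_subtype
    have h1 : #(span ℤ s) ≤ #(s →₀ ℤ) := by
      refine Cardinal.mk_le_of_surjective (f := fun l : s →₀ ℤ =>
        (⟨Finsupp.linearCombination ℤ ((↑) : s → M) l,
          (Finsupp.mem_span_iff_linearCombination ℤ s _).2 ⟨l, rfl⟩⟩ : span ℤ s)) ?_
      rintro ⟨x, hx⟩
      obtain ⟨l, hl⟩ := (Finsupp.mem_span_iff_linearCombination ℤ s x).1 hx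
      exact ⟨l, Subtype.ext hl⟩
    refine h1.trans ?_
    rw [Cardinal.mk_finsupp_lift_of_infinite' s ℤ]
    simp [Cardinal.mk_int, max_comm]

lemma mk_finsupp_int_le (α : Type u) : #(α →₀ ℤ) ≤ max ℵ₀ #α := by
  classical
  rcases isEmpty_or_nonempty α with h | h
  · have : Subsingleton (α →₀ ℤ) := ⟨fun a b => by ext x; exact isEmptyElim x⟩
    exact le_trans (Cardinal.le_one_iff_subsingleton.2 this)
      (le_trans Cardinal.one_le_aleph0 (le_max_left _ _))
  · rw [Cardinal.mk_finsupp_lift_of_infinite' α ℤ]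
    simp [Cardinal.mk_int, max_comm]

lemma dual_eq_zero_of_span_union {A : Type u} [AddCommGroup A] (𝒯 : Set (AddSubgroup A))
    (h : ∀ H ∈ 𝒯, ∀ φ : H →+ ℤ, φ = 0)
    (φ : (span ℤ (⋃ H ∈ 𝒯, (H : Set A))) →+ ℤ) : φ = 0 := by
  have key : ∀ (a : A) (ha : a ∈ span ℤ (⋃ H ∈ 𝒯, (H : Set A))), φ ⟨a, ha⟩ = 0 := by
    intro a ha
    induction ha using span_induction with
    | mem x hx =>
      rcases Set.mem_iUnion₂.1 hx with ⟨H, hH, hxH⟩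
      set ψ : H →+ ℤ := AddMonoidHom.mk'
        (fun y => φ ⟨(y : A), subset_span (Set.mem_iUnion₂.2 ⟨H, hH, y.2⟩)⟩)
        (by intro a b; rw [← φ.map_add]; rfl) with hψ
      have := h H hH ψ
      have := congrFun (congrArg DFunLike.coe this) ⟨x, hxH⟩
      simpa [hψ] using this
    | zero => rw [show (⟨0, _⟩ : (span ℤ (⋃ H ∈ 𝒯, (H : Set A)))) = 0 from rfl, map_zero]
    | add x y hx hy ihx ihy =>
      rw [show (⟨x + y, _⟩ : (span ℤ (⋃ H ∈ 𝒯, (H : Set A)))) = ⟨x, hx⟩ + ⟨y, hy⟩ from rfl,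
        map_add, ihx, ihy, add_zero]
    | smul n x hx ih =>
      rw [show (⟨n • x, _⟩ : (span ℤ (⋃ H ∈ 𝒯, (H : Set A)))) = n • ⟨x, hx⟩ from rfl]
      rw [map_zsmul, ih, smul_zero]
  ext ⟨a, ha⟩
  simpa using key a ha

lemma finset_subset_iUnion_of_monotone {α : Type*} {s : ℕ → Set α} (hmono : Monotone s)
    (t : Finset α) (h : ∀ x ∈ t, ∃ n, x ∈ s n) : ∃ n, ∀ x ∈ t, x ∈ s n := by
  classical
  induction t using Finset.induction with
  | empty => exact ⟨0, by simp⟩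
  | @insert a t' hx ih =>
    obtain ⟨n, hn⟩ := ih (fun x hx => h x (Finset.mem_insert_of_mem hx))
    obtain ⟨m, hm⟩ := h a (Finset.mem_insert_self _ _)
    refine ⟨max n m, fun x hx => ?_⟩
    rcases Finset.mem_insert.1 hx with rfl | hx
    · exact hmono (le_max_right _ _) hm
    · exact hmono (le_max_left _ _) (hn x hx)

lemma mk_iUnion_nat_lt {α : Type u} {μ : Cardinal.{u}} (hreg : μ.IsRegular) (hℵ : ℵ₀ < μ)
    (s : ℕ → Set α) (h : ∀ n, #(s n) < μ) : #(⋃ n, s n) < μ := by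
  have he : (⋃ n, s n) = ⋃ i : ULift.{u} ℕ, s i.down := by
    ext x; simp only [Set.mem_iUnion]
    exact ⟨fun ⟨n, hn⟩ => ⟨⟨n⟩, hn⟩, fun ⟨i, hi⟩ => ⟨i.down, hi⟩⟩
  rw [he]
  refine lt_of_le_of_lt (mk_iUnion_le _) ?_
  have hu : #(ULift.{u} ℕ) = ℵ₀ := by simp
  refine Cardinal.mul_lt_of_lt hreg.aleph0_le (hu ▸ hℵ) ?_
  exact Cardinal.iSup_lt_of_isRegular hreg (hu ▸ hℵ) (fun i => h i.down)

lemma mk_biUnion_lt {α ι : Type u} {μ : Cardinal.{u}} (hreg : μ.IsRegular)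
    (I : Set ι) (hI : #I < μ) (f : ι → Set α) (hf : ∀ i ∈ I, #(f i) < μ) :
    #(⋃ i ∈ I, f i) < μ := by
  rw [Set.biUnion_eq_iUnion]
  refine lt_of_le_of_lt (mk_iUnion_le _) ?_
  refine Cardinal.mul_lt_of_lt hreg.aleph0_le hI ?_
  exact Cardinal.iSup_lt_of_isRegular hreg hI (fun i => hf i i.2)

lemma addHom_eq_linearCombination {X : Type u} (ψ : (X →₀ ℤ) →+ ℤ) (v : X →₀ ℤ) :
    ψ v = Finsupp.linearCombination ℤ (fun x => ψ (Finsupp.single x 1)) v := by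
  have h : ψ = (Finsupp.linearCombination ℤ
      (fun x => ψ (Finsupp.single x 1))).toAddMonoidHom := by
    apply Finsupp.addHom_ext
    intro x n
    have hs : Finsupp.single x n = n • Finsupp.single x (1 : ℤ) := by
      rw [Finsupp.smul_single]; norm_num
    rw [hs, map_zsmul, map_zsmul]
    simp [Finsupp.linearCombination_single]
  exact congrFun (congrArg DFunLike.coe h) v


/-- Implication (2) ⇒ (3) of Proposition 3.1: let `κ` be uncountable and suppose
there is a regular `l ≤ κ` such that every abelian group with trivial dual is the
sum of its subgroups of cardinality `< l` having trivial dual. Then for every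
nonempty system `S` of homogeneous `ℤ`-linear equations with no weakly nontrivial
solution in `ℤ` and every `C ⊆ S` with `|C| < κ`, there is `T` with `C ⊆ T ⊆ S`,
`|T| < κ`, having no weakly nontrivial solution in `ℤ`. -/
theorem stmt18 {κ : Cardinal.{u}} (hκ : Cardinal.aleph0 < κ)
    (h2 : ∃ l : Cardinal.{u}, l ≤ κ ∧ l.IsRegular ∧
      ∀ (A : Type u) [AddCommGroup A], (∀ φ : A →+ ℤ, φ = 0) →
        (⨆ H ∈ {H : AddSubgroup A |
          Cardinal.mk H < l ∧ ∀ φ : H →+ ℤ, φ = 0}, H) = ⊤)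
    {J X : Type u} (k : J → (X →₀ ℤ)) (hJ : Nonempty J)
    (hS : ¬ ∃ f : X → ℤ, (∀ j, ((k j).sum fun x a => a * f x) = 0) ∧
        ∃ x, (∃ j, k j x ≠ 0) ∧ f x ≠ 0)
    (C : Set J) (hC : Cardinal.mk C < κ) :
    ∃ T : Set J, C ⊆ T ∧ Cardinal.mk T < κ ∧
      ¬ ∃ f : X → ℤ, (∀ j ∈ T, ((k j).sum fun x a => a * f x) = 0) ∧
          ∃ x, (∃ j ∈ T, k j x ≠ 0) ∧ f x ≠ 0 := by
  classical
  obtain ⟨l, hlκ, hlreg, hl⟩ := h2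
  set irr : Set (X →₀ ℤ) := {v | ∃ x, (¬ ∃ j, k j x ≠ 0) ∧ v = Finsupp.single x 1} with hirr
  set gens : Set (X →₀ ℤ) := Set.range k ∪ irr with hgens
  set K : Submodule ℤ (X →₀ ℤ) := span ℤ gens with hK
  set A := (X →₀ ℤ) ⧸ K with hA'
  set π : (X →₀ ℤ) →ₗ[ℤ] A := K.mkQ with hπ
  -- every additive hom A →+ ℤ comes from a solution, hence is zero
  have hgensK : ∀ v ∈ gens, π v = 0 := by
    intro v hv
    rw [hπ, Submodule.mkQ_apply, Submodule.Quotient.mk_eq_zero]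
    exact subset_span hv
  have hA : ∀ φ : A →+ ℤ, φ = 0 := by
    intro φ
    set f : X → ℤ := fun x => φ (π (Finsupp.single x 1)) with hf
    have heval : ∀ v : X →₀ ℤ, φ (π v) = Finsupp.linearCombination ℤ f v := by
      intro v
      have := addHom_eq_linearCombination (φ.comp π.toAddMonoidHom) v
      simpa [hf] using this
    have hsol : ∀ j, ((k j).sum fun x a => a * f x) = 0 := by
      intro j
      have h1 : φ (π (k j)) = 0 := by
        rw [hgensK _ (Set.mem_union_left _ ⟨j, rfl⟩), map_zero]
      rw [heval] at h1
      simpa [Finsupp.linearCombination_apply, Finsupp.sum, smul_eq_mul] using h1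
    have hzero : ∀ x, f x = 0 := by
      intro x
      by_cases hx : ∃ j, k j x ≠ 0
      · by_contra hfx
        exact hS ⟨f, hsol, x, hx, hfx⟩
      · have hmem : Finsupp.single x (1 : ℤ) ∈ gens :=
          Set.mem_union_right _ ⟨x, hx, rfl⟩
        show φ (π (Finsupp.single x 1)) = 0
        rw [hgensK _ hmem, map_zero]
    ext a
    obtain ⟨v, rfl⟩ := Submodule.mkQ_surjective K a
    show φ (π v) = 0
    rw [heval, Finsupp.linearCombination_apply]
    simp [Finsupp.sum, hzero]
  have hsup := hl A hA
  set 𝒮 : Set (AddSubgroup A) :=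
    {H : AddSubgroup A | Cardinal.mk H < l ∧ ∀ φ : H →+ ℤ, φ = 0} with h𝒮
  -- finite covering families
  have hfin : ∀ a : A, ∃ t : Set (AddSubgroup A), t ⊆ 𝒮 ∧ t.Finite ∧
      a ∈ span ℤ (⋃ H ∈ t, (H : Set A)) := by
    intro a
    have ha : a ∈ (⨆ H ∈ 𝒮, H : AddSubgroup A) := by rw [hsup]; trivial
    have hle : (⨆ H ∈ 𝒮, H : AddSubgroup A) ≤
        (span ℤ (⋃ H ∈ 𝒮, (H : Set A))).toAddSubgroup := by
      refine iSup₂_le fun H hH => ?_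
      intro x hx
      exact subset_span (Set.mem_iUnion₂.2 ⟨H, hH, hx⟩)
    have ha2 : a ∈ span ℤ (⋃ H ∈ 𝒮, (H : Set A)) := (Submodule.mem_toAddSubgroup _).1 (hle ha)
    obtain ⟨t0, ht0sub, ht0mem⟩ := Submodule.mem_span_finite_of_mem_span ha2
    have hchoice : ∀ u : t0, ∃ H, H ∈ 𝒮 ∧ (u : A) ∈ H := by
      intro u
      have := ht0sub u.2
      rcases Set.mem_iUnion₂.1 this with ⟨H, hH, hu⟩
      exact ⟨H, hH, hu⟩
    choose gH hg1 hg2 using hchoice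
    refine ⟨Set.range gH, Set.range_subset_iff.2 hg1, Set.finite_range gH, ?_⟩
    refine span_mono ?_ ht0mem
    intro u hu
    exact Set.mem_iUnion₂.2 ⟨gH ⟨u, hu⟩, Set.mem_range_self _, hg2 ⟨u, hu⟩⟩
  -- the regular cardinal μ
  set c0 : Cardinal.{u} := max (#C) ℵ₀ with hc0
  set μ : Cardinal.{u} := max l (Order.succ c0) with hμ
  have hc0succ : c0 < Order.succ c0 := Order.lt_succ c0
  have hμreg : μ.IsRegular := by
    rcases le_total l (Order.succ c0) with h | h
    · rw [hμ, max_eq_right h]; exact Cardinal.isRegular_succ (le_max_right _ _)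
    · rw [hμ, max_eq_left h]; exact hlreg
  have hμκ : μ ≤ κ := by
    refine max_le hlκ ?_
    rw [Order.succ_le_iff]
    exact max_lt hC hκ
  have hℵμ : ℵ₀ < μ :=
    lt_of_le_of_lt (le_max_right _ _) (lt_of_lt_of_le hc0succ (le_max_right _ _))
  have hCμ : #C < μ :=
    lt_of_le_of_lt (le_max_left _ _) (lt_of_lt_of_le hc0succ (le_max_right _ _))
  have hlμ : l ≤ μ := le_max_left _ _
  -- cardinality of supported finsupps
  have hsupcard : ∀ Y : Set X, #Y < μ → #{v : X →₀ ℤ | ↑v.support ⊆ Y} < μ := by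
    intro Y hY
    have he : {v : X →₀ ℤ | ↑v.support ⊆ Y} = (Finsupp.supported ℤ ℤ Y : Set (X →₀ ℤ)) := by
      ext v
      simp [Finsupp.mem_supported]
    rw [he]
    have h1 : #(Finsupp.supported ℤ ℤ Y) = #(Y →₀ ℤ) :=
      Cardinal.mk_congr (Finsupp.supportedEquivFinsupp Y).toEquiv
    calc #(Finsupp.supported ℤ ℤ Y) = #(Y →₀ ℤ) := h1
      _ ≤ max ℵ₀ #Y := mk_finsupp_int_le _
      _ < μ := max_lt hℵμ hY
  -- the closing-off step
  have hstep : ∀ (Y : Set X) (T : Set J), #Y < μ → #T < μ →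
      ∃ (Y' : Set X) (T' : Set J) (𝒯 : Set (AddSubgroup A)),
        Y ⊆ Y' ∧ T ⊆ T' ∧ #Y' < μ ∧ #T' < μ ∧ 𝒯 ⊆ 𝒮 ∧
        (∀ x ∈ Y, π (Finsupp.single x 1) ∈ span ℤ (⋃ H ∈ 𝒯, (H : Set A))) ∧
        (∀ H ∈ 𝒯, ∀ a ∈ H, ∃ v : X →₀ ℤ, ↑v.support ⊆ Y' ∧ π v = a) ∧
        (∀ v : X →₀ ℤ, ↑v.support ⊆ Y → v ∈ K → v ∈ span ℤ (k '' T' ∪ irr)) ∧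
        (∀ j ∈ T', ((k j).support : Set X) ⊆ Y') := by
    intro Y T hY hT
    choose tx htx1 htx2 htx3 using (fun x : X => hfin (π (Finsupp.single x 1)))
    set 𝒯 : Set (AddSubgroup A) := ⋃ x ∈ Y, tx x with h𝒯
    have h𝒯𝒮 : 𝒯 ⊆ 𝒮 := Set.iUnion₂_subset (fun x _ => htx1 x)
    have h𝒯card : #𝒯 < μ :=
      mk_biUnion_lt hμreg Y hY tx (fun x _ => ((htx2 x).lt_aleph0).trans hℵμ)
    have hcov' : ∀ x ∈ Y, π (Finsupp.single x 1) ∈ span ℤ (⋃ H ∈ 𝒯, (H : Set A)) := by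
      intro x hx
      refine span_mono ?_ (htx3 x)
      intro u hu
      rcases Set.mem_iUnion₂.1 hu with ⟨H, hH, huH⟩
      exact Set.mem_iUnion₂.2 ⟨H, Set.mem_iUnion₂.2 ⟨x, hx, hH⟩, huH⟩
    -- representatives
    choose r hr using (fun a : A => Submodule.mkQ_surjective K a)
    set U𝒯 : Set A := ⋃ H ∈ 𝒯, (H : Set A) with hU𝒯
    have hU𝒯card : #U𝒯 < μ := by
      rw [hU𝒯, Set.biUnion_eq_iUnion]
      refine lt_of_le_of_lt mk_iUnion_le_sum_mk ?_
      refine Cardinal.sum_lt_of_isRegular hμreg (by simpa using h𝒯card) ?_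
      intro H
      exact lt_of_lt_of_le (h𝒯𝒮 H.2).1 hlμ
    set Yrep : Set X := ⋃ a ∈ U𝒯, ((r a).support : Set X) with hYrep
    have hYrepcard : #Yrep < μ :=
      mk_biUnion_lt hμreg _ hU𝒯card _
        (fun a _ => ((r a).support.finite_toSet.lt_aleph0).trans hℵμ)
    -- relations
    set R : Set (X →₀ ℤ) := {v | ↑v.support ⊆ Y ∧ v ∈ K} with hR
    have hRcard : #R < μ :=
      lt_of_le_of_lt (Cardinal.mk_le_mk_of_subset (fun v hv => hv.1)) (hsupcard Y hY)
    have hrelc : ∀ v : R, ∃ s : Finset (X →₀ ℤ), ↑s ⊆ gens ∧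
        (v : X →₀ ℤ) ∈ span ℤ (s : Set (X →₀ ℤ)) :=
      fun v => Submodule.mem_span_finite_of_mem_span v.2.2
    choose sv hsv1 hsv2 using hrelc
    have hpick : ∀ u : X →₀ ℤ, ∃ Tu : Set J, Tu.Finite ∧
        (u ∈ Set.range k → ∃ j ∈ Tu, k j = u) := by
      intro u
      by_cases hu : u ∈ Set.range k
      · obtain ⟨j, hj⟩ := hu
        exact ⟨{j}, Set.finite_singleton _, fun _ => ⟨j, rfl, hj⟩⟩
      · exact ⟨∅, Set.finite_empty, fun h => absurd h hu⟩
    choose Tu hTu1 hTu2 using hpick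
    set T' : Set J := T ∪ ⋃ v : R, ⋃ u ∈ sv v, Tu u with hT'
    have hT'card : #T' < μ := by
      refine lt_of_le_of_lt (Cardinal.mk_union_le _ _)
        (Cardinal.add_lt_of_lt hμreg.aleph0_le hT ?_)
      refine lt_of_le_of_lt (mk_iUnion_le _) ?_
      refine Cardinal.mul_lt_of_lt hμreg.aleph0_le hRcard ?_
      refine lt_of_le_of_lt (ciSup_le' ?_) hℵμ
      intro v
      exact (((sv v).finite_toSet.biUnion (fun u _ => hTu1 u)).lt_aleph0).le
    set Y' : Set X := (Y ∪ Yrep) ∪ ⋃ j ∈ T', ((k j).support : Set X) with hY'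
    have hY'card : #Y' < μ := by
      refine lt_of_le_of_lt (Cardinal.mk_union_le _ _)
        (Cardinal.add_lt_of_lt hμreg.aleph0_le
          (lt_of_le_of_lt (Cardinal.mk_union_le _ _)
            (Cardinal.add_lt_of_lt hμreg.aleph0_le hY hYrepcard)) ?_)
      exact mk_biUnion_lt hμreg _ hT'card _
        (fun j _ => ((k j).support.finite_toSet.lt_aleph0).trans hℵμ)
    refine ⟨Y', T', 𝒯, fun x hx => Set.mem_union_left _ (Set.mem_union_left _ hx),
      Set.subset_union_left, hY'card, hT'card, h𝒯𝒮, hcov', ?_, ?_, ?_⟩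
    · -- representatives
      intro H hH a ha
      have haU : a ∈ U𝒯 := Set.mem_iUnion₂.2 ⟨H, hH, ha⟩
      refine ⟨r a, ?_, hr a⟩
      intro x hx
      exact Set.mem_union_left _ (Set.mem_union_right _ (Set.mem_iUnion₂.2 ⟨a, haU, hx⟩))
    · -- relations
      intro v hvsupp hvK
      have hvR : v ∈ R := ⟨hvsupp, hvK⟩
      refine span_mono ?_ (hsv2 ⟨v, hvR⟩)
      intro u hu
      have hug : u ∈ gens := hsv1 ⟨v, hvR⟩ hu
      rcases hug with hrange | hirr'
      · obtain ⟨j, hjTu, hjk⟩ := hTu2 u hrange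
        refine Set.mem_union_left _ ⟨j, ?_, hjk⟩
        refine Set.mem_union_right _ ?_
        exact Set.mem_iUnion.2 ⟨⟨v, hvR⟩, Set.mem_iUnion₂.2 ⟨u, hu, hjTu⟩⟩
      · exact Set.mem_union_right _ hirr'
    · -- supports of new equations
      intro j hj x hx
      exact Set.mem_union_right _ (Set.mem_iUnion₂.2 ⟨j, hj, hx⟩)
  -- package the step for recursion
  have hstep' : ∀ p : Set X × Set J, ∃ q : Set X × Set J × Set (AddSubgroup A),
      (#p.1 < μ → #p.2 < μ →
        p.1 ⊆ q.1 ∧ p.2 ⊆ q.2.1 ∧ #q.1 < μ ∧ #q.2.1 < μ ∧ q.2.2 ⊆ 𝒮 ∧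
        (∀ x ∈ p.1, π (Finsupp.single x 1) ∈ span ℤ (⋃ H ∈ q.2.2, (H : Set A))) ∧
        (∀ H ∈ q.2.2, ∀ a ∈ H, ∃ v : X →₀ ℤ, ↑v.support ⊆ q.1 ∧ π v = a) ∧
        (∀ v : X →₀ ℤ, ↑v.support ⊆ p.1 → v ∈ K → v ∈ span ℤ (k '' q.2.1 ∪ irr)) ∧
        (∀ j ∈ q.2.1, ((k j).support : Set X) ⊆ q.1)) := by
    intro p
    by_cases h : #p.1 < μ ∧ #p.2 < μ
    · obtain ⟨Y', T', 𝒯, h1, h2, h3, h4, h5, h6, h7, h8, h9⟩ := hstep p.1 p.2 h.1 h.2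
      exact ⟨(Y', T', 𝒯), fun _ _ => ⟨h1, h2, h3, h4, h5, h6, h7, h8, h9⟩⟩
    · exact ⟨(∅, ∅, ∅), fun h1 h2 => absurd ⟨h1, h2⟩ h⟩
  choose stepf hstepf using hstep'
  set Y0 : Set X := ⋃ j ∈ C, ((k j).support : Set X) with hY0
  have hY0card : #Y0 < μ :=
    mk_biUnion_lt hμreg _ hCμ _
      (fun j _ => ((k j).support.finite_toSet.lt_aleph0).trans hℵμ)
  set seq : ℕ → Set X × Set J × Set (AddSubgroup A) :=
    fun n => Nat.rec (motive := fun _ => Set X × Set J × Set (AddSubgroup A))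
      (Y0, C, (∅ : Set (AddSubgroup A))) (fun _ ih => stepf (ih.1, ih.2.1)) n with hseq
  have hinv : ∀ n, #(seq n).1 < μ ∧ #(seq n).2.1 < μ := by
    intro n
    induction n with
    | zero => exact ⟨hY0card, hCμ⟩
    | succ n ih =>
      have h := hstepf ((seq n).1, (seq n).2.1) ih.1 ih.2
      exact ⟨h.2.2.1, h.2.2.2.1⟩
  have hP : ∀ n,
      (seq n).1 ⊆ (seq (n+1)).1 ∧ (seq n).2.1 ⊆ (seq (n+1)).2.1 ∧
      (seq (n+1)).2.2 ⊆ 𝒮 ∧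
      (∀ x ∈ (seq n).1, π (Finsupp.single x 1) ∈
        span ℤ (⋃ H ∈ (seq (n+1)).2.2, (H : Set A))) ∧
      (∀ H ∈ (seq (n+1)).2.2, ∀ a ∈ H, ∃ v : X →₀ ℤ,
        ↑v.support ⊆ (seq (n+1)).1 ∧ π v = a) ∧
      (∀ v : X →₀ ℤ, ↑v.support ⊆ (seq n).1 → v ∈ K →
        v ∈ span ℤ (k '' (seq (n+1)).2.1 ∪ irr)) ∧
      (∀ j ∈ (seq (n+1)).2.1, ((k j).support : Set X) ⊆ (seq (n+1)).1) := by
    intro n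
    have h := hstepf ((seq n).1, (seq n).2.1) (hinv n).1 (hinv n).2
    exact ⟨h.1, h.2.1, h.2.2.2.2.1, h.2.2.2.2.2.1, h.2.2.2.2.2.2.1,
      h.2.2.2.2.2.2.2.1, h.2.2.2.2.2.2.2.2⟩
  set YW : Set X := ⋃ n, (seq n).1 with hYW
  set TT : Set J := ⋃ n, (seq n).2.1 with hTT
  set 𝒯W : Set (AddSubgroup A) := ⋃ n, (seq n).2.2 with h𝒯W
  have hmonoY : Monotone fun n => (seq n).1 := monotone_nat_of_le_succ (fun n => (hP n).1)
  have hTTcard : #TT < μ := mk_iUnion_nat_lt hμreg hℵμ _ (fun n => (hinv n).2)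
  have hCTT : C ⊆ TT := fun j hj => Set.mem_iUnion.2 ⟨0, hj⟩
  refine ⟨TT, hCTT, lt_of_lt_of_le hTTcard hμκ, ?_⟩
  rintro ⟨f, hsol, x₀, ⟨j₀, hj₀, hkx₀⟩, hfx₀⟩
  set f' : X → ℤ := fun x => if ∃ j ∈ TT, k j x ≠ 0 then f x else 0 with hf'
  have hsol' : ∀ j ∈ TT, ((k j).sum fun x a => a * f' x) = 0 := by
    intro j hj
    rw [← hsol j hj]
    refine Finsupp.sum_congr ?_
    intro x hx
    have hfx : f' x = f x := if_pos ⟨j, hj, Finsupp.mem_support_iff.1 hx⟩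
    rw [hfx]
  set lin : (X →₀ ℤ) →ₗ[ℤ] ℤ := Finsupp.linearCombination ℤ f' with hlin
  have hlingen : span ℤ (k '' TT ∪ irr) ≤ LinearMap.ker lin := by
    rw [span_le]
    rintro u (⟨j, hjT, rfl⟩ | ⟨x, hxirr, rfl⟩)
    · have h0 := hsol' j hjT
      simp only [SetLike.mem_coe, LinearMap.mem_ker, hlin, Finsupp.linearCombination_apply]
      simpa [smul_eq_mul] using h0
    · have h0 : f' x = 0 := if_neg (fun ⟨j, _, hj⟩ => hxirr ⟨j, hj⟩)
      simp only [SetLike.mem_coe, LinearMap.mem_ker, hlin]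
      rw [Finsupp.linearCombination_single, h0, smul_zero]
  have key1 : ∀ v : X →₀ ℤ, ↑v.support ⊆ YW → v ∈ K → lin v = 0 := by
    intro v hv hvK
    obtain ⟨n, hn⟩ := finset_subset_iUnion_of_monotone hmonoY v.support
      (fun x hx => Set.mem_iUnion.1 (hv hx))
    have hvn : ↑v.support ⊆ (seq n).1 := fun x hx => hn x hx
    have h1 := (hP n).2.2.2.2.2.1 v hvn hvK
    have hsub : v ∈ span ℤ (k '' TT ∪ irr) :=
      span_mono (Set.union_subset_union_left _
        (Set.image_mono (f := k) (Set.subset_iUnion (fun n => (seq n).2.1) (n+1)))) h1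
    exact hlingen hsub
  set M0 : Submodule ℤ (X →₀ ℤ) := Finsupp.supported ℤ ℤ YW with hM0
  set m : M0 →ₗ[ℤ] A := π.comp M0.subtype with hm
  set N : Submodule ℤ A := LinearMap.range m with hN
  have hNspan : N = span ℤ (⋃ H ∈ 𝒯W, (H : Set A)) := by
    apply le_antisymm
    · rintro a ⟨w, rfl⟩
      have hw : (w : X →₀ ℤ) ∈ span ℤ ((fun x => Finsupp.single x (1 : ℤ)) '' YW) := by
        rw [← Finsupp.supported_eq_span_single]
        exact w.2
      have h1 : π (w : X →₀ ℤ) ∈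
          Submodule.map π (span ℤ ((fun x => Finsupp.single x (1 : ℤ)) '' YW)) :=
        Submodule.mem_map_of_mem hw
      rw [Submodule.map_span] at h1
      have h2 : π '' ((fun x => Finsupp.single x (1 : ℤ)) '' YW) ⊆
          ↑(span ℤ (⋃ H ∈ 𝒯W, (H : Set A))) := by
        rintro b ⟨u, ⟨x, hxY, rfl⟩, rfl⟩
        obtain ⟨n, hn⟩ := Set.mem_iUnion.1 hxY
        have h3 := (hP n).2.2.2.1 x hn
        exact span_mono (Set.biUnion_subset_biUnion_left
          (Set.subset_iUnion (fun n => (seq n).2.2) (n+1))) h3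
      exact span_le.2 h2 h1
    · rw [span_le]
      rintro a ha
      rcases Set.mem_iUnion₂.1 ha with ⟨H, hH𝒯, haH⟩
      rcases Set.mem_iUnion.1 hH𝒯 with ⟨n, hn⟩
      cases n with
      | zero => exact absurd hn (Set.notMem_empty _)
      | succ n =>
        obtain ⟨v, hvsupp, hveq⟩ := (hP n).2.2.2.2.1 H hn a haH
        have hvM0 : v ∈ M0 := (Finsupp.mem_supported ℤ v).2
          (hvsupp.trans (Set.subset_iUnion (fun n => (seq n).1) (n+1)))
        exact ⟨⟨v, hvM0⟩, hveq⟩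
  have hNdual : ∀ φ : N →+ ℤ, φ = 0 := by
    intro φ
    set ι : (span ℤ (⋃ H ∈ 𝒯W, (H : Set A))) →+ N :=
      AddMonoidHom.mk' (fun x => ⟨x.1, hNspan.ge x.2⟩) (fun a b => rfl) with hι
    have h𝒯Wdual : ∀ H ∈ 𝒯W, ∀ ψ : H →+ ℤ, ψ = 0 := by
      intro H hH
      rcases Set.mem_iUnion.1 hH with ⟨n, hn⟩
      cases n with
      | zero => exact absurd hn (Set.notMem_empty _)
      | succ n => exact ((hP n).2.2.1 hn).2
    have hz := dual_eq_zero_of_span_union 𝒯W h𝒯Wdual (φ.comp ι)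
    ext ⟨a, ha⟩
    have ha' : a ∈ span ℤ (⋃ H ∈ 𝒯W, (H : Set A)) := hNspan.le ha
    have hz2 := congrFun (congrArg DFunLike.coe hz) ⟨a, ha'⟩
    simpa [hι] using hz2
  set lin0 : M0 →ₗ[ℤ] ℤ := lin.comp M0.subtype with hlin0
  have hker : LinearMap.ker m ≤ LinearMap.ker lin0 := by
    rintro ⟨v, hvM0⟩ hv
    have hπv : π v = 0 := hv
    have hvK : v ∈ K := by
      rwa [hπ, Submodule.mkQ_apply, Submodule.Quotient.mk_eq_zero] at hπv
    exact key1 v ((Finsupp.mem_supported ℤ v).1 hvM0) hvK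
  set φlin : N →ₗ[ℤ] ℤ := (Submodule.liftQ (LinearMap.ker m) lin0 hker).comp
    (m.quotKerEquivRange).symm.toLinearMap with hφlin
  have hφeval : ∀ w : M0, φlin ⟨m w, LinearMap.mem_range_self m w⟩ = lin0 w := by
    intro w
    rw [hφlin]
    simp only [LinearMap.coe_comp, Function.comp_apply, LinearEquiv.coe_toLinearMap]
    rw [LinearMap.quotKerEquivRange_symm_apply_image m w (LinearMap.mem_range_self m w),
      Submodule.mkQ_apply, Submodule.liftQ_apply]
  have hφ0 := hNdual φlin.toAddMonoidHom
  have hx₀YW : x₀ ∈ YW := by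
    rcases Set.mem_iUnion.1 hj₀ with ⟨n, hn⟩
    cases n with
    | zero =>
      exact Set.mem_iUnion.2 ⟨0, Set.mem_iUnion₂.2 ⟨j₀, hn, Finsupp.mem_support_iff.2 hkx₀⟩⟩
    | succ n =>
      exact Set.mem_iUnion.2 ⟨n+1, (hP n).2.2.2.2.2.2 j₀ hn (Finsupp.mem_support_iff.2 hkx₀)⟩
  have hw0 : Finsupp.single x₀ (1 : ℤ) ∈ M0 := by
    refine (Finsupp.mem_supported ℤ _).2 ?_
    intro y hy
    rw [Finsupp.support_single_ne_zero x₀ one_ne_zero] at hy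
    rcases Finset.mem_singleton.1 hy with rfl
    exact hx₀YW
  have hval : lin0 ⟨Finsupp.single x₀ 1, hw0⟩ = f x₀ := by
    show lin (Finsupp.single x₀ 1) = f x₀
    have hfx : f' x₀ = f x₀ := if_pos ⟨j₀, hj₀, hkx₀⟩
    rw [hlin, Finsupp.linearCombination_single, one_smul, hfx]
  have hzero : φlin ⟨m ⟨Finsupp.single x₀ 1, hw0⟩,
      LinearMap.mem_range_self m ⟨Finsupp.single x₀ 1, hw0⟩⟩ = 0 :=
    congrFun (congrArg DFunLike.coe hφ0) _
  rw [hφeval, hval] at hzero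
  exact hfx₀ hzero
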